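/- Let (X, μ) be a measure space with total mass μ(X) = V ∈ (0,∞), let F : X → ℝ be measurable, and let k, n be real numbers with 0 < k ≤ n, q > 1, M > 0. Assume ∫_X e^{nF} dμ = V and ∫_X e^{qnF} dμ ≤ M^q. Then ∫_X e^{kF} dμ ≥ min( V/2, (V/(2M))^{q/(q−1)} ). -/

import Mathlib

open MeasureTheory

/-- Lower bound on `∫ e^(kF)` from the normalization `∫ e^(nF) = V` and the `L^q`
bound `∫ e^(qnF) ≤ M^q`, for `0 < k ≤ n` and `q > 1`. -/
theorem lower_bound_exp_kF {X : Type*} [MeasurableSpace X] (μ : Measure X)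
    (F : X → ℝ) (hF : Measurable F)
    (k n q M V : ℝ) (hk : 0 < k) (hkn : k ≤ n) (hq : 1 < q) (hM : 0 < M)
    (hV : 0 < V) (hμV : μ Set.univ = ENNReal.ofReal V)
    (hint_n : Integrable (fun x => Real.exp (n * F x)) μ)
    (hint_qn : Integrable (fun x => Real.exp (q * n * F x)) μ)
    (hint_k : Integrable (fun x => Real.exp (k * F x)) μ)
    (hnorm : ∫ x, Real.exp (n * F x) ∂μ = V)
    (hLq : ∫ x, Real.exp (q * n * F x) ∂μ ≤ M ^ q) :
    min (V / 2) ((V / (2 * M)) ^ (q / (q - 1))) ≤ ∫ x, Real.exp (k * F x) ∂μ := by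
  have hq0 : (0 : ℝ) < q := lt_trans one_pos hq
  have hq1 : (0 : ℝ) < q - 1 := by linarith
  have hfin : IsFiniteMeasure μ := ⟨by rw [hμV]; exact ENNReal.ofReal_lt_top⟩
  set A : Set X := {x | F x ≤ 0} with hA
  have hmA : MeasurableSet A := measurableSet_le hF measurable_const
  have hmB : MeasurableSet Aᶜ := hmA.compl
  -- split of the normalization integral
  have hsplit : (∫ x in A, Real.exp (n * F x) ∂μ) + (∫ x in Aᶜ, Real.exp (n * F x) ∂μ) = V := by
    rw [integral_add_compl hmA hint_n, hnorm]
  -- lower bound of the k-integral by the two pieces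
  have hsplitk : (∫ x in A, Real.exp (k * F x) ∂μ) + (∫ x in Aᶜ, Real.exp (k * F x) ∂μ)
      = ∫ x, Real.exp (k * F x) ∂μ := integral_add_compl hmA hint_k
  have hAle : (∫ x in A, Real.exp (n * F x) ∂μ) ≤ ∫ x in A, Real.exp (k * F x) ∂μ := by
    refine setIntegral_mono_on hint_n.integrableOn hint_k.integrableOn hmA ?_
    intro x hx
    have hx' : F x ≤ 0 := hx
    exact Real.exp_le_exp.mpr (mul_le_mul_of_nonpos_right hkn hx')
  set xB : ℝ := (μ Aᶜ).toReal with hxB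
  have hxB0 : 0 ≤ xB := ENNReal.toReal_nonneg
  have hBle : xB ≤ ∫ x in Aᶜ, Real.exp (k * F x) ∂μ := by
    have h1 : (∫ _ in Aᶜ, (1 : ℝ) ∂μ) = xB := by
      simp [hxB, measureReal_def]
    rw [← h1]
    refine setIntegral_mono_on ?_ hint_k.integrableOn hmB ?_
    · exact integrableOn_const (measure_lt_top μ _).ne
    · intro x hx
      have hx' : ¬ F x ≤ 0 := hx
      have : 0 ≤ k * F x := le_of_lt (mul_pos hk (lt_of_not_ge hx'))
      exact Real.one_le_exp this
  have hAnn : 0 ≤ ∫ x in A, Real.exp (n * F x) ∂μ :=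
    setIntegral_nonneg hmA fun x _ => (Real.exp_pos _).le
  have hAnnk : 0 ≤ ∫ x in A, Real.exp (k * F x) ∂μ :=
    setIntegral_nonneg hmA fun x _ => (Real.exp_pos _).le
  by_cases hcase : V / 2 ≤ ∫ x in A, Real.exp (n * F x) ∂μ
  · -- first case: the A-part is big
    refine le_trans (min_le_left _ _) (le_trans hcase (le_trans hAle ?_))
    rw [← hsplitk]
    have : 0 ≤ ∫ x in Aᶜ, Real.exp (k * F x) ∂μ := le_trans hxB0 hBle
    linarith
  · -- second case: the B-part is big; use Hölder
    push_neg at hcase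
    have hBbig : V / 2 ≤ ∫ x in Aᶜ, Real.exp (n * F x) ∂μ := by linarith
    -- Memℒp of exp(nF) with exponent q
    have hq0' : (ENNReal.ofReal q) ≠ 0 := by
      simp only [ne_eq, ENNReal.ofReal_eq_zero, not_le]; exact hq0
    have hqt : (ENNReal.ofReal q) ≠ ⊤ := ENNReal.ofReal_ne_top
    have hone : (ENNReal.ofReal q) / (ENNReal.ofReal q) = 1 := ENNReal.div_self hq0' hqt
    have hmeas : AEStronglyMeasurable (fun x => Real.exp (n * F x)) μ :=
      (Real.measurable_exp.comp (hF.const_mul n)).aestronglyMeasurable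
    have hkey := memLp_norm_rpow_iff (p := ENNReal.ofReal q) hmeas hq0' hqt
    rw [hone] at hkey
    have heq : (fun x => ‖Real.exp (n * F x)‖ ^ (ENNReal.ofReal q).toReal)
        = fun x => Real.exp (q * n * F x) := by
      funext x
      rw [Real.norm_of_nonneg (Real.exp_pos _).le, ENNReal.toReal_ofReal hq0.le,
        ← Real.exp_mul]
      ring_nf
    rw [heq] at hkey
    have hmemf : MemLp (fun x => Real.exp (n * F x)) (ENNReal.ofReal q) μ :=
      hkey.mp (memLp_one_iff_integrable.mpr hint_qn)
    have hconj : Real.HolderConjugate q (q / (q - 1)) := Real.HolderConjugate.conjExponent hq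
    have hH := integral_mul_le_Lp_mul_Lq_of_nonneg (μ := μ.restrict Aᶜ) hconj
      (Filter.Eventually.of_forall fun x => (Real.exp_pos (n * F x)).le)
      (Filter.Eventually.of_forall fun _ => (zero_le_one : (0:ℝ) ≤ 1))
      (hmemf.restrict Aᶜ) (memLp_const (1 : ℝ))
    simp only [mul_one] at hH
    have heq2 : (∫ x in Aᶜ, Real.exp (n * F x) ^ q ∂μ) = ∫ x in Aᶜ, Real.exp (q * n * F x) ∂μ := by
      refine integral_congr_ae (Filter.Eventually.of_forall fun x => ?_)
      show Real.exp (n * F x) ^ q = Real.exp (q * n * F x)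
      rw [← Real.exp_mul]; ring_nf
    have heq3 : (∫ _ in Aᶜ, (1:ℝ) ^ (q / (q - 1)) ∂μ) = xB := by
      simp [Real.one_rpow, hxB, measureReal_def]
    rw [heq2, heq3] at hH
    -- bound the q-integral over B by M^q
    have hBq : (∫ x in Aᶜ, Real.exp (q * n * F x) ∂μ) ≤ M ^ q :=
      le_trans (setIntegral_le_integral hint_qn
        (Filter.Eventually.of_forall fun x => (Real.exp_pos _).le)) hLq
    have hBqnn : 0 ≤ ∫ x in Aᶜ, Real.exp (q * n * F x) ∂μ :=
      setIntegral_nonneg hmB fun x _ => (Real.exp_pos _).le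
    have hMq : (∫ x in Aᶜ, Real.exp (q * n * F x) ∂μ) ^ (1 / q) ≤ M := by
      calc (∫ x in Aᶜ, Real.exp (q * n * F x) ∂μ) ^ (1 / q)
          ≤ (M ^ q) ^ (1 / q) := Real.rpow_le_rpow hBqnn hBq (by positivity)
        _ = M := by
            rw [← Real.rpow_mul hM.le, mul_one_div_cancel (ne_of_gt hq0), Real.rpow_one]
    have hinvconj : 1 / (q / (q - 1)) = (q - 1) / q := one_div_div _ _
    rw [hinvconj] at hH
    have hxpow0 : (0:ℝ) ≤ xB ^ ((q - 1) / q) := Real.rpow_nonneg hxB0 _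
    have hVM : V / 2 ≤ M * xB ^ ((q - 1) / q) := by
      calc V / 2 ≤ ∫ x in Aᶜ, Real.exp (n * F x) ∂μ := hBbig
        _ ≤ (∫ x in Aᶜ, Real.exp (q * n * F x) ∂μ) ^ (1 / q) * xB ^ ((q - 1) / q) := hH
        _ ≤ M * xB ^ ((q - 1) / q) := mul_le_mul_of_nonneg_right hMq hxpow0
    have hdiv : V / (2 * M) ≤ xB ^ ((q - 1) / q) := by
      rw [div_le_iff₀ (by positivity : (0:ℝ) < 2 * M)]
      nlinarith [hVM]
    have hfinal : (V / (2 * M)) ^ (q / (q - 1)) ≤ xB := by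
      have h1 : ((V / (2 * M)) : ℝ) ^ (q / (q - 1))
          ≤ (xB ^ ((q - 1) / q)) ^ (q / (q - 1)) :=
        Real.rpow_le_rpow (by positivity) hdiv (by positivity)
      have h2 : (xB ^ ((q - 1) / q)) ^ (q / (q - 1)) = xB := by
        rw [← Real.rpow_mul hxB0]
        rw [div_mul_div_comm]
        rw [show (q - 1) * q / (q * (q - 1)) = 1 from by
          rw [mul_comm (q-1) q, div_self (by positivity : (0:ℝ) < q*(q-1)).ne']]
        exact Real.rpow_one xB
      rwa [h2] at h1
    refine le_trans (min_le_right _ _) (le_trans hfinal ?_)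
    rw [← hsplitk]
    linarith [le_trans hBle (le_refl _), hAnnk, hBle]
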